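/- Validity of the strengthened non-adoption cut: if for design z¹ trip r is guaranteed not to be adopted under any z ≤ z¹, then every consistent pair (z, δ^r) satisfies Σ_{(h,l): z¹_{hl}=0} z_{hl} ≥ δ^r. -/

import Mathlib

/-- Validity of the strengthened non-adoption cut: if non-adoption is
guaranteed under every design `z ≤ z1`, then every consistent pair `(z, δ)`
satisfies `Σ_{(h,l): z1_{hl}=0} z_{hl} ≥ δ`. -/
theorem strengthened_non_adoption_cut_valid {H : Type*} [Fintype H]
    (adopt : (H → H → Bool) → Bool) (z1 : H → H → Bool)
    (hguar : ∀ z : H → H → Bool,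
      (∀ h l, z h l = true → z1 h l = true) → adopt z = false) :
    ∀ (z : H → H → Bool) (δ : ℤ),
      δ = (if adopt z then 1 else 0) →
      δ ≤ ∑ p : H × H,
        (if z1 p.1 p.2 then 0 else (if z p.1 p.2 then (1 : ℤ) else 0)) := by
  intro z δ hδ
  have hnonneg : (0:ℤ) ≤ ∑ p : H × H,
      (if z1 p.1 p.2 then 0 else (if z p.1 p.2 then (1 : ℤ) else 0)) := by
    apply Finset.sum_nonneg
    intro p _
    split
    · norm_num
    · split <;> norm_num
  by_cases hle : ∀ h l, z h l = true → z1 h l = true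
  · have := hguar z hle
    simp [hδ, this]
    exact hnonneg
  · push_neg at hle
    obtain ⟨h, l, hz, hz1⟩ := hle
    have h1 : (1:ℤ) ≤ ∑ p : H × H,
        (if z1 p.1 p.2 then 0 else (if z p.1 p.2 then (1 : ℤ) else 0)) := by
      have := Finset.single_le_sum (f := fun p : H × H =>
        (if z1 p.1 p.2 then 0 else (if z p.1 p.2 then (1 : ℤ) else 0)))
        (fun p _ => by split_ifs <;> norm_num)
        (Finset.mem_univ (h, l))
      simpa [hz, hz1] using this
    calc δ ≤ 1 := by rw [hδ]; split <;> norm_num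
    _ ≤ _ := h1
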